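/- Let G be a finite connected simple graph on n ≥ 2 vertices whose resistance curvature satisfies κ_i ≥ K for all vertices i, for some K > 0. Then for every function f : V → ℝ with Σ_{v∈V} f(v) = 0, one has Σ_{(u,v)∈E} (f(u) − f(v))² ≥ 2K Σ_{v∈V} f(v)², where the sum on the left runs over each edge of G once. -/

import Mathlib

open Finset SimpleGraph Matrix

/-- The resistance matrix of a graph: `Ω i j = Γ⁻¹ i i + Γ⁻¹ j j - 2 Γ⁻¹ i j`
where `Γ = L + (1/n) J` with `L` the Laplacian and `J` the all-ones matrix. -/
noncomputable def resistanceMatrix {V : Type*} [Fintype V] [DecidableEq V]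
    (G : SimpleGraph V) [DecidableRel G.Adj] : Matrix V V ℝ :=
  Matrix.of fun i j =>
    letI Γinv := (G.lapMatrix ℝ + Matrix.of fun _ _ => (1 : ℝ) / Fintype.card V)⁻¹
    Γinv i i + Γinv j j - 2 * Γinv i j

section Aux

lemma edge_sum_eq {V : Type*} [Fintype V] [DecidableEq V] (G : SimpleGraph V) [DecidableRel G.Adj]
    (p : V → V → ℝ) (hp : ∀ a b, p a b = p b a) :
    ∑ e ∈ G.edgeFinset, Sym2.lift ⟨p, hp⟩ e
      = (∑ i, ∑ j, if G.Adj i j then p i j else 0) / 2 := by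
  have hdart : ∑ d : G.Dart, Sym2.lift ⟨p, hp⟩ d.edge
      = ∑ e ∈ G.edgeFinset, 2 * Sym2.lift ⟨p, hp⟩ e := by
    rw [← Finset.sum_fiberwise_of_maps_to (s := (univ : Finset G.Dart)) (t := G.edgeFinset)
      (g := SimpleGraph.Dart.edge)
      (fun d _ => by rw [mem_edgeFinset]; exact d.edge_mem)
      (fun d : G.Dart => Sym2.lift ⟨p, hp⟩ d.edge)]
    refine Finset.sum_congr rfl fun e he => ?_
    have h2 : ∀ d ∈ univ.filter (fun d : G.Dart => d.edge = e),
        Sym2.lift ⟨p, hp⟩ d.edge = Sym2.lift ⟨p, hp⟩ e :=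
      fun d hd => by rw [(Finset.mem_filter.1 hd).2]
    rw [Finset.sum_congr rfl h2, Finset.sum_const,
      G.dart_edge_fiber_card e (by rwa [← mem_edgeFinset]), nsmul_eq_mul]
    norm_num
  have hdart2 : ∑ d : G.Dart, Sym2.lift ⟨p, hp⟩ d.edge
      = ∑ i, ∑ j, if G.Adj i j then p i j else 0 := by
    calc ∑ d : G.Dart, Sym2.lift ⟨p, hp⟩ d.edge
        = ∑ z ∈ (univ ×ˢ univ).filter (fun z : V × V => G.Adj z.1 z.2), p z.1 z.2 :=
          Finset.sum_bij (fun d _ => d.toProd)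
            (fun d _ => Finset.mem_filter.2
              ⟨Finset.mem_product.2 ⟨Finset.mem_univ _, Finset.mem_univ _⟩, d.adj⟩)
            (fun a _ b _ h => SimpleGraph.Dart.ext a b h)
            (fun z hz => ⟨⟨z, (Finset.mem_filter.1 hz).2⟩, Finset.mem_univ _, rfl⟩)
            (fun d _ => rfl)
      _ = ∑ z ∈ (univ ×ˢ univ : Finset (V × V)), if G.Adj z.1 z.2 then p z.1 z.2 else 0 :=
          Finset.sum_filter _ _
      _ = ∑ i, ∑ j, if G.Adj i j then p i j else 0 := Finset.sum_product _ _ _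
  rw [eq_div_iff (by norm_num : (2:ℝ) ≠ 0)]
  rw [← hdart2, hdart, Finset.sum_mul]
  exact Finset.sum_congr rfl fun e _ => by ring

lemma sos_key {V : Type*} [Fintype V] (Ω : V → V → ℝ) (hsym : ∀ i j, Ω i j = Ω j i)
    (hnn : ∀ i j, 0 ≤ Ω i j) (κ : V → ℝ) (hκpos : ∀ i, 0 < κ i)
    (hΩκ : ∀ i, ∑ j, Ω i j * κ j = 1) (f : V → ℝ) :
    -(∑ i, (f i)^2 / κ i) ≤ ∑ i, ∑ j, Ω i j * f i * f j := by
  have h1 : ∑ i, ∑ j, Ω i j * (κ j * (f i)^2 / κ i) = ∑ i, (f i)^2 / κ i := by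
    refine Finset.sum_congr rfl fun i _ => ?_
    have : ∀ j, Ω i j * (κ j * (f i)^2 / κ i) = (Ω i j * κ j) * ((f i)^2 / κ i) := fun j => by
      ring
    simp_rw [this]
    rw [← Finset.sum_mul, hΩκ i, one_mul]
  have hswap : ∑ i, ∑ j, Ω i j * (κ i * (f j)^2 / κ j)
      = ∑ i, ∑ j, Ω i j * (κ j * (f i)^2 / κ i) := by
    rw [Finset.sum_comm]
    exact Finset.sum_congr rfl fun i _ => Finset.sum_congr rfl fun j _ => by rw [hsym]
  have hpos : 0 ≤ ∑ i, ∑ j, Ω i j *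
      (κ j * (f i)^2 / κ i + κ i * (f j)^2 / κ j + 2 * (f i * f j)) := by
    refine Finset.sum_nonneg fun i _ => Finset.sum_nonneg fun j _ => ?_
    have hb : κ j * (f i)^2 / κ i + κ i * (f j)^2 / κ j + 2 * (f i * f j)
        = (κ j * f i + κ i * f j)^2 / (κ i * κ j) := by
      field_simp [(hκpos i).ne', (hκpos j).ne']
      ring
    rw [hb]
    exact mul_nonneg (hnn i j) (div_nonneg (sq_nonneg _) (le_of_lt (mul_pos (hκpos i) (hκpos j))))
  have hexp : ∀ i j, Ω i j * (κ j * (f i)^2 / κ i + κ i * (f j)^2 / κ j + 2 * (f i * f j))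
      = Ω i j * (κ j * (f i)^2 / κ i) + Ω i j * (κ i * (f j)^2 / κ j)
        + 2 * (Ω i j * f i * f j) := fun i j => by ring
  simp_rw [hexp, Finset.sum_add_distrib] at hpos
  rw [hswap, h1] at hpos
  have h2 : ∑ i, ∑ j, 2 * (Ω i j * f i * f j) = 2 * ∑ i, ∑ j, Ω i j * f i * f j := by
    simp_rw [← Finset.mul_sum]
  rw [h2] at hpos
  linarith

lemma gamma_quad {V : Type*} [Fintype V] [DecidableEq V]
    (G : SimpleGraph V) [DecidableRel G.Adj] (hn : 2 ≤ Fintype.card V) (f : V → ℝ) :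
    f ⬝ᵥ ((G.lapMatrix ℝ + Matrix.of fun _ _ => (1 : ℝ) / Fintype.card V) *ᵥ f)
      = f ⬝ᵥ (G.lapMatrix ℝ *ᵥ f) + (∑ v, f v)^2 / Fintype.card V := by
  rw [add_mulVec, dotProduct_add]
  congr 1
  simp only [mulVec, dotProduct, Matrix.of_apply]
  simp_rw [← Finset.mul_sum, ← Finset.sum_mul]
  field_simp

lemma gamma_posDef {V : Type*} [Fintype V] [DecidableEq V]
    (G : SimpleGraph V) [DecidableRel G.Adj]
    (hconn : G.Connected) (hn : 2 ≤ Fintype.card V) :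
    (G.lapMatrix ℝ + Matrix.of fun _ _ => (1 : ℝ) / Fintype.card V).PosDef := by
  have hcard : (0:ℝ) < Fintype.card V := by
    have : 0 < Fintype.card V := by omega
    exact_mod_cast this
  refine Matrix.PosDef.of_dotProduct_mulVec_pos ?_ ?_
  · rw [IsHermitian, conjTranspose_eq_transpose_of_trivial, transpose_add,
      (isSymm_lapMatrix ℝ G).eq]
    congr 1
  · intro f hff
    rw [star_trivial]
    have hL0 : 0 ≤ f ⬝ᵥ (G.lapMatrix ℝ *ᵥ f) := by
      have := (posSemidef_lapMatrix ℝ G).dotProduct_mulVec_nonneg f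
      rwa [star_trivial] at this
    rw [gamma_quad G hn f]
    rcases lt_or_eq_of_le hL0 with h | h
    · have : 0 ≤ (∑ v, f v)^2 / Fintype.card V := by positivity
      linarith
    · have hconst : ∀ i j : V, f i = f j := by
        have h0 : Matrix.toLinearMap₂' ℝ (G.lapMatrix ℝ) f f = 0 := by
          rw [Matrix.toLinearMap₂'_apply', ← h]
        rw [lapMatrix_toLinearMap₂'_apply'_eq_zero_iff_forall_reachable] at h0
        exact fun i j => h0 i j (hconn.preconnected i j)
      obtain ⟨i, hi⟩ := Function.ne_iff.mp hff
      have hsum : ∑ v, f v = (Fintype.card V : ℝ) * f i := by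
        rw [Finset.sum_congr rfl fun j _ => hconst j i, Finset.sum_const, Finset.card_univ,
          nsmul_eq_mul]
      have : (∑ v, f v)^2 / Fintype.card V > 0 := by
        rw [hsum]
        have : (Fintype.card V : ℝ) * f i ≠ 0 := mul_ne_zero (ne_of_gt hcard) hi
        positivity
      linarith

end Aux

theorem edge_sum_sq_ge_of_resistance_curvature_ge'
    {V : Type*} [Fintype V] [DecidableEq V]
    (G : SimpleGraph V) [DecidableRel G.Adj]
    (hconn : G.Connected) (hn : 2 ≤ Fintype.card V)
    (κ : V → ℝ)
    (hκ : (Matrix.of fun i j =>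
      letI Γinv := (G.lapMatrix ℝ + Matrix.of fun _ _ => (1 : ℝ) / Fintype.card V)⁻¹
      Γinv i i + Γinv j j - 2 * Γinv i j) *ᵥ κ = fun _ => 1)
    (K : ℝ) (hK : 0 < K) (hcurv : ∀ i, K ≤ κ i)
    (f : V → ℝ) (hf : ∑ v, f v = 0) :
    f ⬝ᵥ (G.lapMatrix ℝ *ᵥ f) ≥ 2 * K * ∑ v, f v ^ 2 := by
  classical
  by_cases hzero : f = 0
  · subst hzero
    simp
  set Γ : Matrix V V ℝ := G.lapMatrix ℝ + Matrix.of fun _ _ => (1 : ℝ) / Fintype.card V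
    with hΓdef
  set M : Matrix V V ℝ := Γ⁻¹ with hMdef
  have hPD : Γ.PosDef := gamma_posDef G hconn hn
  have hMPD : M.PosDef := hPD.inv
  have hMsymm : ∀ i j, M i j = M j i := by
    intro i j
    have h := congrFun (congrFun hMPD.1 i) j
    simpa [Matrix.conjTranspose_apply] using h.symm
  have hMΓ : M * Γ = 1 := Matrix.nonsing_inv_mul Γ hPD.det_pos.ne'.isUnit
  have hκpos : ∀ i, 0 < κ i := fun i => lt_of_lt_of_le hK (hcurv i)
  set Ω : V → V → ℝ := fun i j => M i i + M j j - 2 * M i j with hΩdef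
  have hΩsym : ∀ i j, Ω i j = Ω j i := fun i j => by
    simp only [hΩdef]
    rw [hMsymm i j]
    ring
  have hΩκ : ∀ i, ∑ j, Ω i j * κ j = 1 := by
    intro i
    have h := congrFun hκ i
    simpa [mulVec, dotProduct, hΩdef, hMdef, hΓdef] using h
  have hΩnn : ∀ i j, 0 ≤ Ω i j := by
    intro i j
    have h := hMPD.posSemidef.dotProduct_mulVec_nonneg
      (fun k => (if k = i then (1:ℝ) else 0) - (if k = j then 1 else 0))
    rw [star_trivial] at h
    have hexp : (fun k => (if k = i then (1:ℝ) else 0) - if k = j then 1 else 0) ⬝ᵥ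
        (M *ᵥ fun k => (if k = i then (1:ℝ) else 0) - if k = j then 1 else 0)
        = (M i i - M j i) - (M i j - M j j) := by
      simp [dotProduct, mulVec, sub_mul, mul_sub, ite_mul, mul_ite, mul_one, mul_zero,
        Finset.sum_sub_distrib, Finset.sum_ite_eq', Finset.mem_univ]
    rw [hexp] at h
    have hms := hMsymm i j
    simp only [hΩdef]
    linarith
  -- quadratic form identities
  have hfMf : f ⬝ᵥ (M *ᵥ f) = ∑ i, ∑ j, f i * (M i j * f j) := by
    simp [dotProduct, mulVec, Finset.mul_sum]
  have hquadΩ : ∑ i, ∑ j, Ω i j * f i * f j = -2 * (f ⬝ᵥ (M *ᵥ f)) := by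
    have hexp : ∀ i j, Ω i j * f i * f j
        = (M i i * f i) * f j + (M j j * f j) * f i - 2 * (f i * (M i j * f j)) := fun i j => by
      simp only [hΩdef]; ring
    have t1 : ∑ i : V, ∑ j : V, (M i i * f i) * f j = 0 := by
      simp_rw [← Finset.mul_sum, hf, mul_zero, Finset.sum_const_zero]
    have t2 : ∑ i : V, ∑ j : V, (M j j * f j) * f i = 0 := by
      rw [Finset.sum_comm]
      simp_rw [← Finset.mul_sum, hf, mul_zero, Finset.sum_const_zero]
    have t3 : ∑ i : V, ∑ j : V, 2 * (f i * (M i j * f j)) = 2 * (f ⬝ᵥ (M *ᵥ f)) := by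
      rw [hfMf]
      simp_rw [← Finset.mul_sum]
    calc ∑ i, ∑ j, Ω i j * f i * f j
        = ∑ i : V, ∑ j : V,
            ((M i i * f i) * f j + (M j j * f j) * f i - 2 * (f i * (M i j * f j))) :=
          Finset.sum_congr rfl fun i _ => Finset.sum_congr rfl fun j _ => hexp i j
      _ = -2 * (f ⬝ᵥ (M *ᵥ f)) := by
          simp_rw [Finset.sum_sub_distrib, Finset.sum_add_distrib]
          rw [t1, t2, t3]
          ring
  have keyineq := sos_key Ω hΩsym hΩnn κ hκpos hΩκ f
  rw [hquadΩ] at keyineq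
  have hsumdiv : ∑ i, (f i)^2 / κ i ≤ (∑ i, (f i)^2) / K := by
    rw [Finset.sum_div]
    refine Finset.sum_le_sum fun i _ => ?_
    gcongr
    exact hcurv i
  have hMf_le : f ⬝ᵥ (M *ᵥ f) ≤ (∑ i, (f i)^2) / (2*K) := by
    have : (∑ i, (f i)^2) / (2*K) = ((∑ i, (f i)^2) / K) / 2 := by ring
    rw [this]
    linarith
  -- Cauchy-Schwarz step
  obtain ⟨i₀, hi₀⟩ := Function.ne_iff.mp hzero
  have hS : 0 < ∑ v, f v ^ 2 :=
    Finset.sum_pos' (fun v _ => sq_nonneg _)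
      ⟨i₀, Finset.mem_univ _, lt_of_le_of_ne (sq_nonneg _) (Ne.symm (pow_ne_zero 2 hi₀))⟩
  have ha : 0 < f ⬝ᵥ (Γ *ᵥ f) := by
    have := hPD.dotProduct_mulVec_pos hzero
    rwa [star_trivial] at this
  have hfdot : f ⬝ᵥ f = ∑ v, f v ^ 2 := by
    simp [dotProduct, sq]
  have hMΓf : M *ᵥ (Γ *ᵥ f) = f := by
    rw [mulVec_mulVec, hMΓ, one_mulVec]
  have hsymdot : ∀ u w : V → ℝ, u ⬝ᵥ (M *ᵥ w) = w ⬝ᵥ (M *ᵥ u) := by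
    intro u w
    simp only [dotProduct, mulVec, Finset.mul_sum]
    rw [Finset.sum_comm]
    exact Finset.sum_congr rfl fun i _ => Finset.sum_congr rfl fun j _ => by
      rw [hMsymm j i]; ring
  set S : ℝ := ∑ v, f v ^ 2 with hSdef
  set a : ℝ := f ⬝ᵥ (Γ *ᵥ f) with hadef
  set t : ℝ := S / a with htdef
  have hcs := hMPD.posSemidef.dotProduct_mulVec_nonneg (f - t • (Γ *ᵥ f))
  rw [star_trivial] at hcs
  have hexpand : (f - t • (Γ *ᵥ f)) ⬝ᵥ (M *ᵥ (f - t • (Γ *ᵥ f)))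
      = f ⬝ᵥ (M *ᵥ f) - 2 * t * S + t^2 * a := by
    rw [mulVec_sub, mulVec_smul, hMΓf, sub_dotProduct, dotProduct_sub, dotProduct_sub,
      smul_dotProduct, smul_dotProduct, dotProduct_smul, dotProduct_smul, smul_eq_mul,
      smul_eq_mul, smul_eq_mul, hsymdot (Γ *ᵥ f) f, hMΓf, hfdot,
      dotProduct_comm (Γ *ᵥ f) f, ← hadef]
    simp only [smul_eq_mul]
    ring
  rw [hexpand] at hcs
  have hta : t^2 * a = S^2 / a := by
    rw [htdef]
    field_simp
  have htS : 2 * t * S = 2 * (S^2 / a) := by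
    rw [htdef]
    field_simp
  rw [hta, htS] at hcs
  have hcs2 : S^2 / a ≤ f ⬝ᵥ (M *ᵥ f) := by linarith
  have hfin : S^2 / a ≤ S / (2*K) := le_trans hcs2 hMf_le
  rw [div_le_div_iff₀ ha (by positivity)] at hfin
  have h2ks : 2 * K * S ≤ a := by nlinarith
  have hΓL : a = f ⬝ᵥ (G.lapMatrix ℝ *ᵥ f) := by
    rw [hadef, hΓdef, gamma_quad G hn f, hf]
    simp
  linarith [h2ks, hΓL.symm.le]


/-- Functional form of the Lichnerowicz estimate: for every mean-zero function `f`,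
the sum over edges of `(f u - f v)²` is at least `2K ∑ f²`. -/
theorem edge_sum_sq_ge_of_resistance_curvature_ge
    {V : Type*} [Fintype V] [DecidableEq V]
    (G : SimpleGraph V) [DecidableRel G.Adj]
    (hconn : G.Connected) (hn : 2 ≤ Fintype.card V)
    (κ : V → ℝ) (hκ : resistanceMatrix G *ᵥ κ = fun _ => 1)
    (K : ℝ) (hK : 0 < K) (hcurv : ∀ i, K ≤ κ i)
    (f : V → ℝ) (hf : ∑ v, f v = 0) :
    ∑ e ∈ G.edgeFinset,
        Sym2.lift ⟨fun u v => (f u - f v) ^ 2, fun u v => by ring⟩ e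
      ≥ 2 * K * ∑ v, f v ^ 2 := by
  have hmain := edge_sum_sq_ge_of_resistance_curvature_ge' G hconn hn κ hκ K hK hcurv f hf
  have hedge : ∑ e ∈ G.edgeFinset,
      Sym2.lift ⟨fun u v => (f u - f v) ^ 2, fun u v => by ring⟩ e
      = f ⬝ᵥ (G.lapMatrix ℝ *ᵥ f) := by
    rw [edge_sum_eq G (fun u v => (f u - f v) ^ 2) (fun u v => by ring),
      ← lapMatrix_toLinearMap₂', Matrix.toLinearMap₂'_apply']
  linarith [hmain, hedge.le, hedge.ge]
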